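/- arXiv:0905.0615 — 2 statements merged into one kernel-verified Lean document; each statement's English description precedes it below -/
import Mathlib

section
/- For all x,y ∈ X, the Peierls barrier satisfies h(x,y) = sup over all critical sub-solutions u and all n,m ∈ ℕ of (T⁻)ⁿu(y) − (T⁺)ᵐu(x) + (n+m)·α[0], the equality holding in ℝ ∪ {+∞}. -/
open Metric Set Filter Topology

/-- `X` is a `B`-length space at scale `K`. -/
def IsBLengthSpaceAtScale (X : Type*) [MetricSpace X] (B K : ℝ) : Prop :=
  ∀ x y : X, ∃ (n : ℕ) (p : ℕ → X), p 0 = x ∧ p n = y ∧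
    (∀ i < n, dist (p i) (p (i + 1)) ≤ K) ∧
    ∑ i ∈ Finset.range n, dist (p i) (p (i + 1)) ≤ B * dist x y

/-- Uniform superlinearity of the cost `c`. -/
def UniformlySuperlinear {X : Type*} [MetricSpace X] (c : X → X → ℝ) : Prop :=
  ∀ k : ℝ, 0 ≤ k → ∃ C : ℝ, ∀ x y : X, k * dist x y - C ≤ c x y

/-- Uniform boundedness of the cost `c`. -/
def UniformlyBounded {X : Type*} [MetricSpace X] (c : X → X → ℝ) : Prop :=
  ∀ R : ℝ, ∃ A : ℝ, ∀ x y : X, dist x y ≤ R → c x y ≤ A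

/-- `u` is `α`-dominated: `u y - u x ≤ c x y + α` for all `x y`. -/
def Dominated {X : Type*} (c : X → X → ℝ) (α : ℝ) (u : X → ℝ) : Prop :=
  ∀ x y : X, u y - u x ≤ c x y + α

/-- Negative Lax-Oleinik semigroup. -/
noncomputable def Tm {X : Type*} (c : X → X → ℝ) (u : X → ℝ) (x : X) : ℝ :=
  ⨅ y, (u y + c y x)

/-- Positive Lax-Oleinik semigroup. -/
noncomputable def Tp {X : Type*} (c : X → X → ℝ) (u : X → ℝ) (x : X) : ℝ :=
  ⨆ y, (u y - c x y)

/-- The critical constant `α[0]`: the smallest `α` for which `α`-dominated functions exist. -/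
noncomputable def critValue {X : Type*} (c : X → X → ℝ) : ℝ :=
  sInf {α : ℝ | ∃ u : X → ℝ, Dominated c α u}

/-- The Mañé potential `φ(x,y) = sup_u (u y - u x)`, sup over critical sub-solutions. -/
noncomputable def mane {X : Type*} (c : X → X → ℝ) (x y : X) : ℝ :=
  sSup {r : ℝ | ∃ u : X → ℝ, Dominated c (critValue c) u ∧ r = u y - u x}

/-- A bi-infinite sequence is `(u,c,α)`-calibrated if all its finite subchains of
consecutive terms are calibrated. -/
def IsCalibrated {X : Type*} (c : X → X → ℝ) (α : ℝ) (u : X → ℝ) (x : ℤ → X) : Prop :=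
  ∀ (m : ℤ) (k : ℕ), u (x (m + k)) =
    u (x m) + (∑ i ∈ Finset.range k, c (x (m + i)) (x (m + i + 1))) + k * α

/-- The projected Aubry set of a critical sub-solution `u`. -/
def projAubry {X : Type*} (c : X → X → ℝ) (u : X → ℝ) : Set X :=
  {p : X | ∃ x : ℤ → X, IsCalibrated c (critValue c) u x ∧ x 0 = p}

/-- The set `Â_u` of pairs of consecutive terms of calibrated bi-infinite sequences. -/
def aubryPairs {X : Type*} (c : X → X → ℝ) (u : X → ℝ) : Set (X × X) :=
  {q : X × X | ∃ (x : ℤ → X) (n : ℤ),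
    IsCalibrated c (critValue c) u x ∧ x n = q.1 ∧ x (n + 1) = q.2}

/-- The projected Aubry set `A = ∩_u A_u`, intersection over all critical sub-solutions. -/
def projAubrySet {X : Type*} (c : X → X → ℝ) : Set X :=
  {p : X | ∀ u : X → ℝ, Dominated c (critValue c) u → p ∈ projAubry c u}

/-- The Aubry pair set `Â = ∩_u Â_u`, intersection over all critical sub-solutions. -/
def aubryPairsSet {X : Type*} (c : X → X → ℝ) : Set (X × X) :=
  {q : X × X | ∀ u : X → ℝ, Dominated c (critValue c) u → q ∈ aubryPairs c u}

/-- `c_n(x,y)`: infimum of total cost over chains of length `n` from `x` to `y`. -/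
noncomputable def cChain {X : Type*} (c : X → X → ℝ) (n : ℕ) (x y : X) : ℝ :=
  sInf {r : ℝ | ∃ p : ℕ → X, p 0 = x ∧ p n = y ∧
    r = ∑ i ∈ Finset.range n, c (p i) (p (i + 1))}

/-- `φ_n(x,y) = inf_{k ≥ n} (c_k(x,y) + k·α)`. -/
noncomputable def phiN {X : Type*} (c : X → X → ℝ) (α : ℝ) (n : ℕ) (x y : X) : ℝ :=
  sInf {r : ℝ | ∃ k : ℕ, n ≤ k ∧ r = cChain c k x y + k * α}

/-- The Peierls barrier, with values in the extended reals. -/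
noncomputable def peierls {X : Type*} (c : X → X → ℝ) (α : ℝ) (x y : X) : EReal :=
  Filter.liminf (fun n : ℕ => ((cChain c n x y + n * α : ℝ) : EReal)) Filter.atTop

/-- Negative Lax-Oleinik semigroup on extended-real-valued functions. -/
noncomputable def eTm {X : Type*} (c : X → X → ℝ) (u : X → EReal) (x : X) : EReal :=
  ⨅ y, (u y + (c y x : EReal))

/-- Positive Lax-Oleinik semigroup on extended-real-valued functions. -/
noncomputable def eTp {X : Type*} (c : X → X → ℝ) (u : X → EReal) (x : X) : EReal :=
  ⨆ y, (u y - (c x y : EReal))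

section Aux
variable {X : Type*} (c : X → X → ℝ)

def SmSet (u : X → ℝ) (n : ℕ) (y : X) : Set ℝ :=
  {r | ∃ p : ℕ → X, p n = y ∧ r = u (p 0) + ∑ i ∈ Finset.range n, c (p i) (p (i + 1))}

def SpSet (u : X → ℝ) (m : ℕ) (x : X) : Set ℝ :=
  {r | ∃ p : ℕ → X, p 0 = x ∧ r = u (p m) - ∑ i ∈ Finset.range m, c (p i) (p (i + 1))}

variable {c}

lemma dom_chain {a : ℝ} {u : X → ℝ} (hu : Dominated c a u) (p : ℕ → X) (n : ℕ) :
    u (p n) ≤ u (p 0) + (∑ i ∈ Finset.range n, c (p i) (p (i + 1))) + n * a := by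
  induction n with
  | zero => simp
  | succ n ih =>
    have h := hu (p n) (p (n + 1))
    rw [Finset.sum_range_succ]
    push_cast
    linarith

lemma SmSet_nonempty (u : X → ℝ) (n : ℕ) (y : X) : (SmSet c u n y).Nonempty :=
  ⟨_, fun _ => y, rfl, rfl⟩

lemma SpSet_nonempty (u : X → ℝ) (m : ℕ) (x : X) : (SpSet c u m x).Nonempty :=
  ⟨_, fun _ => x, rfl, rfl⟩

lemma SmSet_bddBelow {a : ℝ} {u : X → ℝ} (hu : Dominated c a u) (n : ℕ) (y : X) :
    BddBelow (SmSet c u n y) := by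
  refine ⟨u y - n * a, ?_⟩
  rintro r ⟨p, hp, rfl⟩
  have := dom_chain hu p n
  rw [hp] at this; linarith

lemma SmSet_sInf_ge {a : ℝ} {u : X → ℝ} (hu : Dominated c a u) (n : ℕ) (y : X) :
    u y - n * a ≤ sInf (SmSet c u n y) := by
  apply le_csInf (SmSet_nonempty u n y)
  rintro r ⟨p, hp, rfl⟩
  have := dom_chain hu p n
  rw [hp] at this; linarith

lemma SpSet_bddAbove {a : ℝ} {u : X → ℝ} (hu : Dominated c a u) (m : ℕ) (x : X) :
    BddAbove (SpSet c u m x) := by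
  refine ⟨u x + m * a, ?_⟩
  rintro r ⟨p, hp, rfl⟩
  have := dom_chain hu p m
  rw [hp] at this; linarith

lemma SpSet_sSup_le {a : ℝ} {u : X → ℝ} (hu : Dominated c a u) (m : ℕ) (x : X) :
    sSup (SpSet c u m x) ≤ u x + m * a := by
  apply csSup_le (SpSet_nonempty u m x)
  rintro r ⟨p, hp, rfl⟩
  have := dom_chain hu p m
  rw [hp] at this; linarith

lemma Tm_iterate [Nonempty X] {a : ℝ} {u : X → ℝ} (hu : Dominated c a u) (n : ℕ) (y : X) :
    (Tm c)^[n] u y = sInf (SmSet c u n y) := by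
  induction n generalizing y with
  | zero =>
    have hset : SmSet c u 0 y = {u y} := by
      ext r
      constructor
      · rintro ⟨p, hp, rfl⟩; simp [hp]
      · rintro rfl; exact ⟨fun _ => y, rfl, by simp⟩
    simp [hset]
  | succ n ih =>
    rw [Function.iterate_succ_apply']
    have hTm : Tm c ((Tm c)^[n] u) y = ⨅ z, (sInf (SmSet c u n z) + c z y) := by
      rw [Tm]
      exact iInf_congr fun z => by rw [ih z]
    rw [hTm]
    have hbdd : BddBelow (Set.range fun z => sInf (SmSet c u n z) + c z y) := by
      refine ⟨u y - (n + 1) * a, ?_⟩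
      rintro r ⟨z, rfl⟩
      have h1 := SmSet_sInf_ge hu n z
      have h2 := hu z y
      push_cast
      linarith
    apply le_antisymm
    · apply le_csInf (SmSet_nonempty u (n + 1) y)
      rintro r ⟨p, hp, rfl⟩
      have h1 : ⨅ z, (sInf (SmSet c u n z) + c z y) ≤ sInf (SmSet c u n (p n)) + c (p n) y :=
        ciInf_le hbdd (p n)
      have h2 : sInf (SmSet c u n (p n)) ≤ u (p 0) + ∑ i ∈ Finset.range n, c (p i) (p (i + 1)) :=
        csInf_le (SmSet_bddBelow hu n (p n)) ⟨p, rfl, rfl⟩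
      rw [Finset.sum_range_succ, hp]
      linarith
    · apply le_ciInf
      intro z
      rw [← sub_le_iff_le_add]
      apply le_csInf (SmSet_nonempty u n z)
      rintro r ⟨p, hpn, rfl⟩
      rw [sub_le_iff_le_add]
      set q : ℕ → X := fun i => if i ≤ n then p i else y with hq
      have hq0 : q 0 = p 0 := if_pos (Nat.zero_le n)
      have hqn1 : q (n + 1) = y := if_neg (by omega)
      have hsum : ∑ i ∈ Finset.range (n + 1), c (q i) (q (i + 1))
          = (∑ i ∈ Finset.range n, c (p i) (p (i + 1))) + c z y := by
        rw [Finset.sum_range_succ]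
        congr 1
        · apply Finset.sum_congr rfl
          intro i hi
          rw [Finset.mem_range] at hi
          rw [hq]
          simp only [if_pos (by omega : i ≤ n), if_pos (by omega : i + 1 ≤ n)]
        · rw [hqn1]
          have : q n = z := by rw [hq]; simp only [if_pos le_rfl]; exact hpn
          rw [this]
      have hmem : u (p 0) + ∑ i ∈ Finset.range n, c (p i) (p (i + 1)) + c z y
          ∈ SmSet c u (n + 1) y := by
        refine ⟨q, hqn1, ?_⟩
        rw [hq0, hsum]
        ring
      have := csInf_le (SmSet_bddBelow hu (n + 1) y) hmem
      linarith

lemma Tp_iterate [Nonempty X] {a : ℝ} {u : X → ℝ} (hu : Dominated c a u) (m : ℕ) (x : X) :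
    (Tp c)^[m] u x = sSup (SpSet c u m x) := by
  induction m generalizing x with
  | zero =>
    have hset : SpSet c u 0 x = {u x} := by
      ext r
      constructor
      · rintro ⟨p, hp, rfl⟩; simp [hp]
      · rintro rfl; exact ⟨fun _ => x, rfl, by simp⟩
    simp [hset]
  | succ m ih =>
    rw [Function.iterate_succ_apply']
    have hTp : Tp c ((Tp c)^[m] u) x = ⨆ w, (sSup (SpSet c u m w) - c x w) := by
      rw [Tp]
      exact iSup_congr fun w => by rw [ih w]
    rw [hTp]
    have hbdd : BddAbove (Set.range fun w => sSup (SpSet c u m w) - c x w) := by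
      refine ⟨u x + (m + 1) * a, ?_⟩
      rintro r ⟨w, rfl⟩
      have h1 := SpSet_sSup_le hu m w
      have h2 := hu x w
      push_cast
      linarith
    apply le_antisymm
    · apply ciSup_le
      intro w
      rw [sub_le_iff_le_add]
      apply csSup_le (SpSet_nonempty u m w)
      rintro r ⟨p, hp0, rfl⟩
      rw [← sub_le_iff_le_add]
      set q : ℕ → X := fun i => Nat.rec x (fun j _ => p j) i with hq
      have hq0 : q 0 = x := rfl
      have hqsucc : ∀ i, q (i + 1) = p i := fun i => rfl
      have hsum : ∑ i ∈ Finset.range (m + 1), c (q i) (q (i + 1))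
          = (∑ i ∈ Finset.range m, c (p i) (p (i + 1))) + c x w := by
        rw [Finset.sum_range_succ']
        have e1 : ∀ i ∈ Finset.range m, c (q (i+1)) (q (i+1+1)) = c (p i) (p (i+1)) :=
          fun i _ => by rw [hqsucc, hqsucc]
        rw [Finset.sum_congr rfl e1, hq0, hqsucc, hp0]
      have hmem : u (p m) - ∑ i ∈ Finset.range m, c (p i) (p (i + 1)) - c x w
          ∈ SpSet c u (m + 1) x := by
        refine ⟨q, hq0, ?_⟩
        rw [hqsucc, hsum]
        ring
      exact le_csSup (SpSet_bddAbove hu (m + 1) x) hmem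
    · apply csSup_le (SpSet_nonempty u (m + 1) x)
      rintro r ⟨p, hp0, rfl⟩
      have hmem : u (p (m + 1)) - ∑ i ∈ Finset.range m, c (p (i + 1)) (p (i + 1 + 1))
          ∈ SpSet c u m (p 1) := ⟨fun i => p (i + 1), rfl, rfl⟩
      have h1 := le_csSup (SpSet_bddAbove hu m (p 1)) hmem
      have hsum : ∑ i ∈ Finset.range (m + 1), c (p i) (p (i + 1))
          = (∑ i ∈ Finset.range m, c (p (i + 1)) (p (i + 1 + 1))) + c (p 0) (p 1) := by
        rw [Finset.sum_range_succ']
      have h2 : sSup (SpSet c u m (p 1)) - c x (p 1)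
          ≤ ⨆ w, (sSup (SpSet c u m w) - c x w) := le_ciSup hbdd (p 1)
      rw [hsum, hp0]
      linarith

end Aux
section Aux2
variable {X : Type*} {c : X → X → ℝ}

lemma Sm_step {a : ℝ} {u : X → ℝ} (hu : Dominated c a u) (n : ℕ) (y : X) :
    sInf (SmSet c u n y) ≤ sInf (SmSet c u (n + 1) y) + a := by
  rw [← sub_le_iff_le_add]
  apply le_csInf (SmSet_nonempty u (n + 1) y)
  rintro r ⟨p, hp, rfl⟩
  rw [sub_le_iff_le_add]
  have hmem : u (p 1) + ∑ i ∈ Finset.range n, c (p (i + 1)) (p (i + 1 + 1))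
      ∈ SmSet c u n y := ⟨fun i => p (i + 1), hp, rfl⟩
  have h1 := csInf_le (SmSet_bddBelow hu n y) hmem
  have h2 := hu (p 0) (p 1)
  have hsum : ∑ i ∈ Finset.range (n + 1), c (p i) (p (i + 1))
      = (∑ i ∈ Finset.range n, c (p (i + 1)) (p (i + 1 + 1))) + c (p 0) (p 1) :=
    Finset.sum_range_succ' _ n
  rw [hsum]; linarith

lemma Sm_mono {a : ℝ} {u : X → ℝ} (hu : Dominated c a u) (n j : ℕ) (y : X) :
    sInf (SmSet c u n y) ≤ sInf (SmSet c u (n + j) y) + j * a := by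
  induction j with
  | zero => simp
  | succ j ih =>
    have := Sm_step hu (n + j) y
    push_cast
    have h2 : sInf (SmSet c u (n + j) y) ≤ sInf (SmSet c u (n + j + 1) y) + a := this
    have h3 : sInf (SmSet c u (n + (j + 1)) y) = sInf (SmSet c u (n + j + 1) y) := by
      norm_num [Nat.add_assoc]
    rw [h3]
    push_cast at ih
    linarith

lemma cChainSet_bddBelow {a : ℝ} {u : X → ℝ} (hu : Dominated c a u) (k : ℕ) (x y : X) :
    BddBelow {r : ℝ | ∃ p : ℕ → X, p 0 = x ∧ p k = y ∧
      r = ∑ i ∈ Finset.range k, c (p i) (p (i + 1))} := by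
  refine ⟨u y - u x - k * a, ?_⟩
  rintro r ⟨p, h0, hk, rfl⟩
  have := dom_chain hu p k
  rw [h0, hk] at this; linarith

lemma cChainSet_nonempty (c : X → X → ℝ) {k : ℕ} (hk : 1 ≤ k) (x y : X) :
    {r : ℝ | ∃ p : ℕ → X, p 0 = x ∧ p k = y ∧
      r = ∑ i ∈ Finset.range k, c (p i) (p (i + 1))}.Nonempty := by
  refine ⟨_, fun i => if i < k then x else y, ?_, ?_, rfl⟩
  · exact if_pos (by omega)
  · exact if_neg (by omega)

lemma key_upper [Nonempty X] {a : ℝ} {u : X → ℝ} (hu : Dominated c a u) (x y : X)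
    (n m k : ℕ) (hkm : n + m ≤ k) (hk1 : 1 ≤ k) :
    (Tm c)^[n] u y - (Tp c)^[m] u x + ((n : ℝ) + m) * a ≤ cChain c k x y + k * a := by
  rw [Tm_iterate hu, Tp_iterate hu]
  set l := k - m with hldef
  have hlm : m + l = k := by omega
  have hn : n ≤ l := by omega
  have hA : sInf (SmSet c u n y) ≤ sInf (SmSet c u l y) + ((l - n : ℕ) : ℝ) * a := by
    have := Sm_mono hu n (l - n) y
    rwa [show n + (l - n) = l by omega] at this
  have hB : sInf (SmSet c u l y) - sSup (SpSet c u m x) ≤ cChain c k x y := by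
    rw [cChain]
    apply le_csInf (cChainSet_nonempty c hk1 x y)
    rintro r ⟨p, hp0, hpk, rfl⟩
    have h1 : sInf (SmSet c u l y)
        ≤ u (p m) + ∑ i ∈ Finset.range l, c (p (m + i)) (p (m + i + 1)) := by
      refine csInf_le (SmSet_bddBelow hu l y) ⟨fun i => p (m + i), ?_, rfl⟩
      show p (m + l) = y
      rw [hlm, hpk]
    have h2 : u (p m) - ∑ i ∈ Finset.range m, c (p i) (p (i + 1))
        ≤ sSup (SpSet c u m x) := le_csSup (SpSet_bddAbove hu m x) ⟨p, hp0, rfl⟩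
    have hsum : ∑ i ∈ Finset.range k, c (p i) (p (i + 1))
        = (∑ i ∈ Finset.range m, c (p i) (p (i + 1)))
          + ∑ i ∈ Finset.range l, c (p (m + i)) (p (m + i + 1)) := by
      rw [← hlm]
      exact Finset.sum_range_add _ m l
    rw [hsum]; linarith
  have hc1 : ((l - n : ℕ) : ℝ) = (l : ℝ) - n := Nat.cast_sub hn
  have hc2 : (l : ℝ) = (k : ℝ) - m := by
    have : (m : ℝ) + l = k := by exact_mod_cast congrArg (Nat.cast : ℕ → ℝ) hlm
    linarith
  rw [hc1, hc2] at hA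
  nlinarith [hA, hB]

end Aux2
section Aux3

lemma exists_critical_subsolution {X : Type*} [MetricSpace X] [Nonempty X] {c : X → X → ℝ}
    (hsl : UniformlySuperlinear c) : ∃ u : X → ℝ, Dominated c (critValue c) u := by
  obtain ⟨C0, hC0⟩ := hsl 0 le_rfl
  have hC0' : ∀ x y : X, -C0 ≤ c x y := fun x y => by have := hC0 x y; simpa using this
  set S := {α : ℝ | ∃ u : X → ℝ, Dominated c α u} with hS
  have hne : C0 ∈ S := ⟨0, fun x y => by have := hC0' x y; simp; linarith⟩
  obtain ⟨x0⟩ := ‹Nonempty X›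
  have hbb : BddBelow S := by
    refine ⟨-c x0 x0, ?_⟩
    rintro α ⟨u, hu⟩
    have := hu x0 x0
    simp at this
    linarith
  have hcrit : critValue c = sInf S := rfl
  have hj : ∀ j : ℕ, ∃ u : X → ℝ, Dominated c (critValue c + 1 / (j + 1)) u := by
    intro j
    have hpos : (0 : ℝ) < 1 / (j + 1) := by positivity
    have hlt : sInf S < critValue c + 1 / (j + 1) := by
      rw [hcrit]; linarith
    obtain ⟨α, hαS, hα⟩ := exists_lt_of_csInf_lt ⟨C0, hne⟩ hlt
    obtain ⟨u, hu⟩ := hαS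
    exact ⟨u, fun a b => le_trans (hu a b) (by linarith)⟩
  choose v hv using hj
  set w : ℕ → X → ℝ := fun j z => v j z - v j x0 with hwdef
  have hw : ∀ j : ℕ, Dominated c (critValue c + 1 / ((j:ℝ) + 1)) (w j) := by
    intro j a b
    have := hv j a b
    simp only [hwdef]
    linarith
  have h1le : ∀ j : ℕ, (1 : ℝ) / (j + 1) ≤ 1 := by
    intro j
    rw [div_le_one (by positivity)]
    have : (0:ℝ) ≤ (j:ℝ) := Nat.cast_nonneg j
    linarith
  have hup : ∀ (j : ℕ) (z : X), w j z ≤ c x0 z + critValue c + 1 := by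
    intro j z
    have := hw j x0 z
    have h2 := h1le j
    simp only [hwdef] at this ⊢
    linarith [this]
  have hlo : ∀ (j : ℕ) (z : X), -(c z x0 + critValue c + 1) ≤ w j z := by
    intro j z
    have := hw j z x0
    have h2 := h1le j
    simp only [hwdef] at this ⊢
    linarith [this]
  set U : Ultrafilter ℕ := Ultrafilter.of atTop with hUdef
  have hU : (U : Filter ℕ) ≤ atTop := Ultrafilter.of_le _
  have hlim : ∀ z : X, ∃ L : ℝ, Filter.Tendsto (fun j => w j z) (U : Filter ℕ) (𝓝 L) := by
    intro z
    have hc : IsCompact (Set.Icc (-(c z x0 + critValue c + 1)) (c x0 z + critValue c + 1)) :=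
      isCompact_Icc
    have hle : (↑(U.map fun j => w j z) : Filter ℝ)
        ≤ 𝓟 (Set.Icc (-(c z x0 + critValue c + 1)) (c x0 z + critValue c + 1)) := by
      rw [Ultrafilter.coe_map, Filter.le_principal_iff]
      exact Filter.mem_map.mpr (Filter.univ_mem' fun j => ⟨hlo j z, hup j z⟩)
    obtain ⟨L, _, hL⟩ := hc.ultrafilter_le_nhds (U.map fun j => w j z) hle
    rw [Ultrafilter.coe_map] at hL
    exact ⟨L, hL⟩
  choose u0 hu0 using hlim
  refine ⟨u0, fun a b => ?_⟩
  have htend1 : Filter.Tendsto (fun j => w j b - w j a) (U : Filter ℕ) (𝓝 (u0 b - u0 a)) :=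
    (hu0 b).sub (hu0 a)
  have htend2 : Filter.Tendsto (fun j : ℕ => c a b + (critValue c + 1 / (j + 1)))
      (U : Filter ℕ) (𝓝 (c a b + (critValue c + 0))) := by
    apply Filter.Tendsto.const_add
    apply Filter.Tendsto.const_add
    exact tendsto_one_div_add_atTop_nhds_zero_nat.mono_left hU
  have hfin := le_of_tendsto_of_tendsto' htend1 htend2 (fun j => by
    have := hw j a b; linarith)
  simpa using hfin

end Aux3
section Aux4
variable {X : Type*}

def PhiSet (c : X → X → ℝ) (α : ℝ) (x : X) (n : ℕ) (z : X) : Set ℝ :=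
  {r | ∃ k, n ≤ k ∧ ∃ p : ℕ → X, p 0 = x ∧ p k = z ∧
    r = (∑ i ∈ Finset.range k, c (p i) (p (i + 1))) + k * α}

variable {c : X → X → ℝ} {α : ℝ} {x : X}

lemma PhiSet_nonempty (c : X → X → ℝ) (α : ℝ) (x : X) (n : ℕ) (z : X) :
    (PhiSet c α x n z).Nonempty := by
  refine ⟨_, max n 1, le_max_left _ _, fun i => if i < max n 1 then x else z, ?_, ?_, rfl⟩
  · exact if_pos (by omega)
  · exact if_neg (by omega)

lemma PhiSet_bddBelow {u0 : X → ℝ} (hu0 : Dominated c α u0) (n : ℕ) (z : X) :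
    BddBelow (PhiSet c α x n z) := by
  refine ⟨u0 z - u0 x, ?_⟩
  rintro r ⟨k, hk, p, hp0, hpk, rfl⟩
  have := dom_chain hu0 p k
  rw [hp0, hpk] at this
  linarith

lemma phi_dominated {u0 : X → ℝ} (hu0 : Dominated c α u0) (n : ℕ) :
    Dominated c α (fun z => sInf (PhiSet c α x n z)) := by
  intro z z'
  simp only
  have key : ∀ r ∈ PhiSet c α x n z, sInf (PhiSet c α x n z') ≤ r + (c z z' + α) := by
    rintro r ⟨k, hk, p, hp0, hpk, rfl⟩
    set q : ℕ → X := fun i => if i ≤ k then p i else z' with hqdef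
    have hq0 : q 0 = p 0 := if_pos (Nat.zero_le k)
    have hqk1 : q (k + 1) = z' := if_neg (by omega)
    have hsum : ∑ i ∈ Finset.range (k + 1), c (q i) (q (i + 1))
        = (∑ i ∈ Finset.range k, c (p i) (p (i + 1))) + c z z' := by
      rw [Finset.sum_range_succ]
      congr 1
      · refine Finset.sum_congr rfl fun i hi => ?_
        rw [Finset.mem_range] at hi
        rw [hqdef]
        simp only [if_pos (by omega : i ≤ k), if_pos (by omega : i + 1 ≤ k)]
      · rw [hqk1]
        congr 1
        rw [hqdef]
        simp only [if_pos le_rfl]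
        exact hpk
    have hmem : (∑ i ∈ Finset.range k, c (p i) (p (i + 1))) + k * α + (c z z' + α)
        ∈ PhiSet c α x n z' := by
      refine ⟨k + 1, by omega, q, by rw [hq0, hp0], hqk1, ?_⟩
      rw [hsum]
      push_cast
      ring
    exact csInf_le (PhiSet_bddBelow hu0 n z') hmem
  have h2 : sInf (PhiSet c α x n z') - (c z z' + α) ≤ sInf (PhiSet c α x n z) := by
    apply le_csInf (PhiSet_nonempty c α x n z)
    intro r hr
    linarith [key r hr]
  linarith

lemma phi_le {u0 : X → ℝ} (hu0 : Dominated c α u0) {n k : ℕ} (hk : n ≤ k)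
    {p : ℕ → X} (hp0 : p 0 = x) :
    sInf (PhiSet c α x n (p k)) ≤ (∑ i ∈ Finset.range k, c (p i) (p (i + 1))) + k * α :=
  csInf_le (PhiSet_bddBelow hu0 n (p k)) ⟨k, hk, p, hp0, rfl, rfl⟩

lemma phi_Tp_le [Nonempty X] {u0 : X → ℝ} (hu0 : Dominated c α u0) {n : ℕ} :
    (Tp c)^[n] (fun z => sInf (PhiSet c α x n z)) x ≤ n * α := by
  rw [Tp_iterate (phi_dominated hu0 n)]
  apply csSup_le (SpSet_nonempty _ n x)
  rintro r ⟨p, hp0, rfl⟩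
  have := phi_le hu0 (le_refl n) hp0
  simp only
  linarith

lemma ereal_le_coe_of_forall_add {a : EReal} {b : ℝ}
    (h : ∀ ε : ℝ, 0 < ε → a ≤ ((b + ε : ℝ) : EReal)) : a ≤ (b : EReal) := by
  induction a using EReal.rec with
  | bot => exact bot_le
  | coe q =>
    rw [EReal.coe_le_coe_iff]
    by_contra hq
    push_neg at hq
    have := h ((q - b) / 2) (by linarith)
    rw [EReal.coe_le_coe_iff] at this
    linarith
  | top =>
    have := h 1 one_pos
    exact absurd this (not_le.mpr (EReal.coe_lt_top _))

end Aux4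
theorem peierls_representation_formula {X : Type*} [MetricSpace X] [Nonempty X] [ProperSpace X]
    {B K : ℝ} (hB : 1 ≤ B) (hK : 0 < K) (hlen : IsBLengthSpaceAtScale X B K)
    {c : X → X → ℝ} (hcont : Continuous fun q : X × X => c q.1 q.2)
    (hsl : UniformlySuperlinear c) (hub : UniformlyBounded c) (x y : X) :
    peierls c (critValue c) x y =
      ⨆ (u : {u : X → ℝ // Dominated c (critValue c) u}) (n : ℕ) (m : ℕ),
        (((Tm c)^[n] u.1 y - (Tp c)^[m] u.1 x + (n + m) * critValue c : ℝ) : EReal) := by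
  classical
  obtain ⟨u0, hu0⟩ := exists_critical_subsolution hsl
  set α := critValue c with hαdef
  have hpe : peierls c α x y
      = ⨆ n : ℕ, ⨅ k ≥ n, ((cChain c k x y + k * α : ℝ) : EReal) := by
    rw [peierls]
    exact liminf_eq_iSup_iInf_of_nat
  rw [hpe]
  apply le_antisymm
  · apply iSup_le
    intro n
    have hstep : (⨅ k ≥ n, ((cChain c k x y + k * α : ℝ) : EReal))
        ≤ ⨅ k ≥ n + 1, ((cChain c k x y + k * α : ℝ) : EReal) :=
      le_iInf₂ fun k hk => iInf₂_le k (by omega)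
    refine hstep.trans ?_
    set uN : X → ℝ := fun z => sInf (PhiSet c α x (n + 1) z) with huN
    have hdom : Dominated c α uN := phi_dominated hu0 (n + 1)
    have h1 : (⨅ k ≥ n + 1, ((cChain c k x y + k * α : ℝ) : EReal))
        ≤ ((uN y : ℝ) : EReal) := by
      apply ereal_le_coe_of_forall_add
      intro ε hε
      have hlt : sInf (PhiSet c α x (n + 1) y) < uN y + ε := lt_add_of_pos_right _ hε
      obtain ⟨r, hrmem, hrlt⟩ :=
        exists_lt_of_csInf_lt (PhiSet_nonempty c α x (n + 1) y) hlt
      obtain ⟨k, hk, p, hp0, hpk, rfl⟩ := hrmem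
      have h2 : (⨅ k ≥ n + 1, ((cChain c k x y + k * α : ℝ) : EReal))
          ≤ ((cChain c k x y + k * α : ℝ) : EReal) := iInf₂_le k hk
      have h3 : cChain c k x y ≤ ∑ i ∈ Finset.range k, c (p i) (p (i + 1)) :=
        csInf_le (cChainSet_bddBelow hu0 k x y) ⟨p, hp0, hpk, rfl⟩
      exact h2.trans (EReal.coe_le_coe_iff.mpr (by linarith))
    refine h1.trans ?_
    refine le_trans ?_
      (le_iSup_of_le ⟨uN, hdom⟩ (le_iSup_of_le 0 (le_iSup_of_le (n + 1) le_rfl)))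
    have h4 : (Tp c)^[n + 1] uN x ≤ ((n + 1 : ℕ) : ℝ) * α := phi_Tp_le hu0
    apply EReal.coe_le_coe_iff.mpr
    simp only [Function.iterate_zero_apply]
    push_cast
    push_cast at h4
    linarith
  · apply iSup_le
    intro u
    apply iSup_le
    intro n
    apply iSup_le
    intro m
    refine le_iSup_of_le (n + m + 1) (le_iInf₂ fun k hk => ?_)
    have hku := key_upper u.2 x y n m k (by omega) (by omega)
    exact EReal.coe_le_coe_iff.mpr hku
end

section
/- Assume the Peierls barrier h is finite. Then for every x ∈ X the function h_x = h(x,·) is a negative weak KAM solution (h_x = T⁻h_x + α[0]) and the function h^x = −h(·,x) is a positive weak KAM solution (h^x = T⁺h^x − α[0]). -/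
open Metric Set Filter Topology

set_option linter.unusedSectionVars false
set_option linter.unusedVariables false

section basic
variable {X : Type*} [MetricSpace X] {c : X → X → ℝ}

/-- chain-sum set -/
def chainSet (c : X → X → ℝ) (n : ℕ) (x y : X) : Set ℝ :=
  {r : ℝ | ∃ p : ℕ → X, p 0 = x ∧ p n = y ∧
    r = ∑ i ∈ Finset.range n, c (p i) (p (i + 1))}

lemma cChain_def (n : ℕ) (x y : X) : cChain c n x y = sInf (chainSet c n x y) := rfl

lemma chainSet_nonempty {n : ℕ} (hn : 1 ≤ n) (x y : X) : (chainSet c n x y).Nonempty := by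
  refine ⟨_, fun i => if i = 0 then x else y, by simp, ?_, rfl⟩
  simp [Nat.one_le_iff_ne_zero.mp hn]

lemma chainSet_bddBelow {C₀ : ℝ} (hC₀ : ∀ x y : X, -C₀ ≤ c x y) (n : ℕ) (x y : X) :
    BddBelow (chainSet c n x y) := by
  refine ⟨-(n * C₀), ?_⟩
  rintro r ⟨p, -, -, rfl⟩
  calc -((n : ℝ) * C₀) = ∑ _i ∈ Finset.range n, (-C₀) := by simp [mul_comm]
    _ ≤ _ := Finset.sum_le_sum fun i _ => hC₀ _ _

lemma cChain_le_sum {C₀ : ℝ} (hC₀ : ∀ x y : X, -C₀ ≤ c x y) {n : ℕ} {p : ℕ → X} {x y : X}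
    (h0 : p 0 = x) (hn : p n = y) :
    cChain c n x y ≤ ∑ i ∈ Finset.range n, c (p i) (p (i + 1)) :=
  csInf_le (chainSet_bddBelow hC₀ n x y) ⟨p, h0, hn, rfl⟩

lemma dominated_le_sum {α : ℝ} {u : X → ℝ} (hu : Dominated c α u) (n : ℕ) (p : ℕ → X) :
    u (p n) - u (p 0) - n * α ≤ ∑ i ∈ Finset.range n, c (p i) (p (i + 1)) := by
  induction n with
  | zero => simp
  | succ n ih =>
      rw [Finset.sum_range_succ, Nat.cast_succ]
      have := hu (p n) (p (n + 1))
      linarith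

lemma dominated_le_cChain {α : ℝ} {u : X → ℝ} (hu : Dominated c α u) {n : ℕ} (hn : 1 ≤ n)
    (x y : X) : u y - u x - n * α ≤ cChain c n x y := by
  refine le_csInf (chainSet_nonempty hn x y) ?_
  rintro r ⟨p, h0, hn', rfl⟩
  have := dominated_le_sum hu n p
  rw [h0, hn'] at this; exact this

/-- existence of a dominated function (with constant `C₀` a lower bound of `-c`). -/
lemma dominated_zero {C₀ : ℝ} (hC₀ : ∀ x y : X, -C₀ ≤ c x y) :
    Dominated c C₀ (fun _ => 0) := fun x y => by have := hC₀ x y; simp; linarith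

lemma critSet_nonempty {C₀ : ℝ} (hC₀ : ∀ x y : X, -C₀ ≤ c x y) :
    {α : ℝ | ∃ u : X → ℝ, Dominated c α u}.Nonempty :=
  ⟨C₀, ⟨_, dominated_zero hC₀⟩⟩

lemma critSet_bddBelow [Nonempty X] {A₀ : ℝ} (hA₀ : ∀ x y : X, dist x y ≤ 0 → c x y ≤ A₀) :
    BddBelow {α : ℝ | ∃ u : X → ℝ, Dominated c α u} := by
  obtain ⟨x⟩ := ‹Nonempty X›
  refine ⟨-A₀, ?_⟩
  rintro α ⟨u, hu⟩
  have h1 := hu x x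
  have h2 := hA₀ x x (by simp)
  linarith

/-- cycles have nonnegative critical cost -/
lemma cycle_nonneg [Nonempty X] {C₀ A₀ : ℝ} (hC₀ : ∀ x y : X, -C₀ ≤ c x y)
    (hA₀ : ∀ x y : X, dist x y ≤ 0 → c x y ≤ A₀) {n : ℕ} (hn : 1 ≤ n) (x : X) :
    -(n * critValue c) ≤ cChain c n x x := by
  have key : ∀ α ∈ {α : ℝ | ∃ u : X → ℝ, Dominated c α u},
      -(cChain c n x x) / n ≤ α := by
    rintro α ⟨u, hu⟩
    have := dominated_le_cChain hu hn x x
    rw [div_le_iff₀ (by exact_mod_cast hn)]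
    nlinarith [(Nat.cast_pos (α := ℝ)).mpr hn]
  have : -(cChain c n x x) / n ≤ critValue c :=
    le_csInf (critSet_nonempty hC₀) key
  rw [div_le_iff₀ (by exact_mod_cast hn)] at this
  nlinarith

/-- near-critical dominated functions exist -/
lemma exists_dominated_near [Nonempty X] {C₀ A₀ : ℝ} (hC₀ : ∀ x y : X, -C₀ ≤ c x y)
    (hA₀ : ∀ x y : X, dist x y ≤ 0 → c x y ≤ A₀) {ε : ℝ} (hε : 0 < ε) :
    ∃ u : X → ℝ, Dominated c (critValue c + ε) u := by
  obtain ⟨α, ⟨u, hu⟩, hlt⟩ := Real.lt_sInf_add_pos (critSet_nonempty hC₀) hε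
  have hlt' : α < critValue c + ε := hlt
  exact ⟨u, fun a b => le_trans (hu a b) (by linarith)⟩

/-- triangle: `c_{m+1}(x,z) ≤ c_m(x,y) + c(y,z)` for `m ≥ 1`. -/
lemma cChain_succ_le {C₀ : ℝ} (hC₀ : ∀ x y : X, -C₀ ≤ c x y) {m : ℕ} (hm : 1 ≤ m)
    (x y z : X) : cChain c (m + 1) x z ≤ cChain c m x y + c y z := by
  have hne := chainSet_nonempty (c := c) hm x y
  refine le_of_forall_pos_le_add fun ε hε => ?_
  obtain ⟨r, ⟨p, h0, hm', rfl⟩, hr⟩ := Real.lt_sInf_add_pos hne hε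
  rw [← cChain_def] at hr
  set q : ℕ → X := fun i => if i ≤ m then p i else z with hq
  have hsum : ∑ i ∈ Finset.range (m + 1), c (q i) (q (i + 1))
      = (∑ i ∈ Finset.range m, c (p i) (p (i + 1))) + c y z := by
    rw [Finset.sum_range_succ]
    congr 1
    · refine Finset.sum_congr rfl fun i hi => ?_
      have hi' := Finset.mem_range.mp hi
      simp [hq, hi'.le, Nat.succ_le_of_lt hi']
    · simp [hq, hm']
  have : cChain c (m + 1) x z ≤ ∑ i ∈ Finset.range (m + 1), c (q i) (q (i + 1)) :=
    cChain_le_sum hC₀ (by simp [hq, h0]) (by simp [hq])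
  rw [hsum] at this
  calc cChain c (m + 1) x z ≤ _ := this
    _ ≤ cChain c m x y + ε + c y z := by linarith [hr.le]
    _ = cChain c m x y + c y z + ε := by ring

/-- triangle both chains: `c_{m+n}(x,z) ≤ c_m(x,y) + c_n(y,z)`, `m,n ≥ 1`. -/
lemma cChain_add_le {C₀ : ℝ} (hC₀ : ∀ x y : X, -C₀ ≤ c x y) {m n : ℕ} (hm : 1 ≤ m)
    (hn : 1 ≤ n) (x y z : X) : cChain c (m + n) x z ≤ cChain c m x y + cChain c n y z := by
  refine le_of_forall_pos_le_add fun ε hε => ?_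
  have hε2 : 0 < ε / 2 := by linarith
  obtain ⟨r, ⟨p, hp0, hpm, rfl⟩, hr⟩ := Real.lt_sInf_add_pos (chainSet_nonempty (c := c) hm x y) hε2
  obtain ⟨s, ⟨q, hq0, hqn, rfl⟩, hs⟩ := Real.lt_sInf_add_pos (chainSet_nonempty (c := c) hn y z) hε2
  rw [← cChain_def] at hr hs
  set w : ℕ → X := fun i => if i ≤ m then p i else q (i - m) with hw
  have hkey : cChain c (m + n) x z ≤ ∑ i ∈ Finset.range (m + n), c (w i) (w (i + 1)) := by
    refine cChain_le_sum hC₀ (by simp [hw, hp0]) ?_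
    have h : ¬ (m + n ≤ m) := by omega
    have h2 : m + n - m = n := by omega
    simp only [hw, if_neg h, h2, hqn]
  have hsplit : ∑ i ∈ Finset.range (m + n), c (w i) (w (i + 1))
      = (∑ i ∈ Finset.range m, c (p i) (p (i + 1)))
        + ∑ i ∈ Finset.range n, c (q i) (q (i + 1)) := by
    rw [Finset.sum_range_add]
    congr 1
    · refine Finset.sum_congr rfl fun i hi => ?_
      have hi' := Finset.mem_range.mp hi
      by_cases h : i + 1 ≤ m
      · simp [hw, hi'.le, h]
      · have : i + 1 = m := by omega
        simp [hw, hi'.le, h, this, hpm, hq0]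
    · refine Finset.sum_congr rfl fun i hi => ?_
      have hi' := Finset.mem_range.mp hi
      by_cases h : i = 0
      · subst h
        by_cases h1 : m + 1 ≤ m
        · omega
        · simp [hw, h1, hpm, hq0]
      · have h1 : ¬ (m + i ≤ m) := by omega
        have h2 : ¬ (m + i + 1 ≤ m) := by omega
        simp only [hw, if_neg h1, if_neg h2]
        congr 2 <;> omega
  rw [hsplit] at hkey
  linarith

end basic


section length
variable {X : Type*} [MetricSpace X] {c : X → X → ℝ}

lemma merge_aux {K : ℝ} (hK : 0 < K) :
    ∀ n : ℕ, ∀ p : ℕ → X, (∀ i < n, dist (p i) (p (i + 1)) ≤ K) →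
    ∃ (m : ℕ) (q : ℕ → X), 1 ≤ m ∧ q 0 = p 0 ∧ q m = p n ∧
      (∀ i < m, dist (q i) (q (i + 1)) ≤ 2 * K) ∧
      (m : ℝ) ≤ (∑ i ∈ Finset.range n, dist (p i) (p (i + 1))) / K + 1 := by
  intro n
  induction n using Nat.strong_induction_on with
  | _ n ih =>
    intro p hstep
    set S := ∑ i ∈ Finset.range n, dist (p i) (p (i + 1)) with hS
    have hS0 : 0 ≤ S := Finset.sum_nonneg fun i _ => dist_nonneg
    by_cases hbig : S ≤ 2 * K
    · refine ⟨1, fun i => if i = 0 then p 0 else p n, le_refl 1, by simp, by simp, ?_, ?_⟩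
      · intro i hi
        interval_cases i
        simpa using le_trans (dist_le_range_sum_dist p n) hbig
      · have : (0:ℝ) ≤ S / K := div_nonneg hS0 hK.le
        push_cast; linarith
    · push_neg at hbig
      set s : ℕ → ℝ := fun j => ∑ i ∈ Finset.range j, dist (p i) (p (i + 1)) with hs
      have hsn : s n = S := rfl
      have hP : ∃ j, K < s j := ⟨n, by rw [hsn]; linarith⟩
      set j := Nat.find hP with hj
      have hjK : K < s j := Nat.find_spec hP
      have hj1 : 1 ≤ j := by
        rcases Nat.eq_zero_or_pos j with h | h
        · exfalso; rw [h] at hjK; simp [hs] at hjK; linarith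
        · exact h
      have hjmono : s (j - 1) ≤ K := by
        have := Nat.find_min hP (m := j - 1) (by omega)
        push_neg at this; exact this
      have hjn : j ≤ n := by
        by_contra h
        push_neg at h
        have := Nat.find_min hP h
        push_neg at this
        rw [hsn] at this; linarith
      have hsj2 : s j ≤ 2 * K := by
        have hd : dist (p (j - 1)) (p (j - 1 + 1)) ≤ K := hstep _ (by omega)
        have h1 : s ((j - 1) + 1) = s (j - 1) + dist (p (j - 1)) (p (j - 1 + 1)) :=
          Finset.sum_range_succ _ _
        have hj' : (j - 1) + 1 = j := by omega
        rw [hj'] at h1 hd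
        linarith
      have hjlt : j < n := by
        rcases lt_or_eq_of_le hjn with h | h
        · exact h
        · exfalso; rw [h, hsn] at hsj2; linarith
      have hsplit : S = s j + ∑ i ∈ Finset.range (n - j), dist (p (j + i)) (p (j + i + 1)) := by
        rw [hS, hs]
        have : n = j + (n - j) := by omega
        conv_lhs => rw [this]
        rw [Finset.sum_range_add]
      obtain ⟨m', q', hm'1, hq'0, hq'm, hq'step, hq'count⟩ :=
        ih (n - j) (by omega) (fun i => p (j + i))
          (fun i hi => by
            show dist (p (j + i)) (p (j + (i + 1))) ≤ K
            have h3 : j + (i + 1) = j + i + 1 := by omega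
            rw [h3]; exact hstep _ (by omega))
      refine ⟨m' + 1, fun i => if i = 0 then p 0 else q' (i - 1), by omega, by simp, ?_, ?_, ?_⟩
      · have h1 : m' + 1 ≠ 0 := by omega
        simp only [if_neg h1, Nat.add_sub_cancel, hq'm]
        congr 1; omega
      · intro i hi
        rcases Nat.eq_zero_or_pos i with h0 | h0
        · subst h0
          simp only [if_pos rfl, if_neg (Nat.one_ne_zero), Nat.sub_self]
          rw [hq'0]
          calc dist (p 0) (p (j + 0)) = dist (p 0) (p j) := by norm_num
            _ ≤ ∑ i ∈ Finset.range j, dist (p i) (p (i + 1)) := dist_le_range_sum_dist p j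
            _ ≤ 2 * K := hsj2
        · have h1 : i ≠ 0 := by omega
          have h2 : i + 1 ≠ 0 := by omega
          simp only [if_neg h1, if_neg h2]
          have : i + 1 - 1 = (i - 1) + 1 := by omega
          rw [this]
          exact hq'step (i - 1) (by omega)
      · have hsub : (∑ i ∈ Finset.range (n - j), dist (p (j + i)) (p (j + i + 1))) = S - s j := by
          linarith
        simp only [← Nat.add_assoc] at hq'count
        rw [hsub] at hq'count
        have e : (S - s j) / K = S / K - s j / K := sub_div _ _ _
        have h1 : 1 ≤ s j / K := (one_le_div hK).mpr hjK.le
        push_cast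
        rw [e] at hq'count
        linarith

lemma exists_short_chain {B K : ℝ} (hK : 0 < K) (hlen : IsBLengthSpaceAtScale X B K)
    (y z : X) : ∃ (m : ℕ) (q : ℕ → X), 1 ≤ m ∧ q 0 = y ∧ q m = z ∧
      (∀ i < m, dist (q i) (q (i + 1)) ≤ 2 * K) ∧ (m : ℝ) ≤ B * dist y z / K + 1 := by
  obtain ⟨n, p, hp0, hpn, hstep, hsum⟩ := hlen y z
  obtain ⟨m, q, hm, hq0, hqm, hqstep, hqcount⟩ := merge_aux hK n p hstep
  refine ⟨m, q, hm, hq0.trans hp0, hqm.trans hpn, hqstep, ?_⟩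
  calc (m : ℝ) ≤ _ / K + 1 := hqcount
    _ ≤ B * dist y z / K + 1 := by
        gcongr
        
lemma cChain_upper_lin {B K : ℝ} (hK : 0 < K) (hlen : IsBLengthSpaceAtScale X B K)
    {C₀ A2 : ℝ} (hC₀ : ∀ x y : X, -C₀ ≤ c x y)
    (hA2 : ∀ x y : X, dist x y ≤ 2 * K → c x y ≤ A2) (α : ℝ) (y z : X) :
    ∃ m : ℕ, 1 ≤ m ∧ cChain c m y z + m * α ≤ max (A2 + α) 0 * (B * dist y z / K + 1) := by
  obtain ⟨m, q, hm, hq0, hqm, hqstep, hqcount⟩ := exists_short_chain hK hlen y z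
  refine ⟨m, hm, ?_⟩
  have h1 : cChain c m y z ≤ ∑ i ∈ Finset.range m, c (q i) (q (i + 1)) :=
    cChain_le_sum hC₀ hq0 hqm
  have h2 : ∑ i ∈ Finset.range m, c (q i) (q (i + 1)) ≤ m * A2 := by
    calc ∑ i ∈ Finset.range m, c (q i) (q (i + 1)) ≤ ∑ _i ∈ Finset.range m, A2 :=
          Finset.sum_le_sum fun i hi => hA2 _ _ (hqstep i (Finset.mem_range.mp hi))
      _ = m * A2 := by simp [mul_comm]
  have h3 : (m : ℝ) * A2 + m * α ≤ m * max (A2 + α) 0 := by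
    have : (m:ℝ) * (A2 + α) ≤ m * max (A2 + α) 0 := by
      apply mul_le_mul_of_nonneg_left (le_max_left _ _) (by positivity)
    linarith
  have h4 : (m : ℝ) * max (A2 + α) 0 ≤ max (A2 + α) 0 * (B * dist y z / K + 1) := by
    rw [mul_comm]
    apply mul_le_mul_of_nonneg_left hqcount (le_max_right _ _)
  linarith

/-- lower bound on `c_n(x,w) + n α₀` linear in `dist w x`. -/
lemma cChain_lower_lin [Nonempty X] {B K : ℝ} (hK : 0 < K) (hlen : IsBLengthSpaceAtScale X B K)
    {C₀ A₀ A2 : ℝ} (hC₀ : ∀ x y : X, -C₀ ≤ c x y)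
    (hA₀ : ∀ x y : X, dist x y ≤ 0 → c x y ≤ A₀)
    (hA2 : ∀ x y : X, dist x y ≤ 2 * K → c x y ≤ A2) {n : ℕ} (hn : 1 ≤ n) (x w : X) :
    -(max (A2 + critValue c) 0 * (B * dist w x / K + 1))
      ≤ cChain c n x w + n * critValue c := by
  obtain ⟨m, hm, hbd⟩ := cChain_upper_lin hK hlen hC₀ hA2 (critValue c) w x
  have htri : cChain c (n + m) x x ≤ cChain c n x w + cChain c m w x :=
    cChain_add_le hC₀ hn hm x w x
  have hcyc : -((n + m : ℕ) * critValue c) ≤ cChain c (n + m) x x :=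
    cycle_nonneg hC₀ hA₀ (by omega) x
  push_cast at hcyc
  linarith

end length


section liminfFacts
variable {X : Type*} [MetricSpace X] {c : X → X → ℝ}

lemma freq_lt_of_liminf {f : ℕ → ℝ} {r : ℝ}
    (h : Filter.liminf (fun n : ℕ => ((f n : ℝ) : EReal)) Filter.atTop = (r : EReal))
    {ε : ℝ} (hε : 0 < ε) : ∃ᶠ n in atTop, f n < r + ε := by
  have h1 : Filter.liminf (fun n : ℕ => ((f n : ℝ) : EReal)) Filter.atTop
      < ((r + ε : ℝ) : EReal) := by
    rw [h]; exact_mod_cast (by linarith : r < r + ε)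
  have := Filter.frequently_lt_of_liminf_lt (u := fun n : ℕ => ((f n : ℝ) : EReal)) (h := h1)
  exact this.mono fun n hn => by simpa using EReal.coe_lt_coe_iff.mp hn

lemma ev_gt_of_liminf {f : ℕ → ℝ} {r : ℝ}
    (h : Filter.liminf (fun n : ℕ => ((f n : ℝ) : EReal)) Filter.atTop = (r : EReal))
    {ε : ℝ} (hε : 0 < ε) : ∀ᶠ n in atTop, r - ε < f n := by
  have h1 : ((r - ε : ℝ) : EReal)
      < Filter.liminf (fun n : ℕ => ((f n : ℝ) : EReal)) Filter.atTop := by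
    rw [h]; exact_mod_cast (by linarith : r - ε < r)
  have := Filter.eventually_lt_of_lt_liminf h1
  exact this.mono fun n hn => by simpa using EReal.coe_lt_coe_iff.mp hn

/-- The barrier is dominated: `h(x,z) ≤ h(x,y) + c(y,z) + α`. -/
lemma peierls_dominated {C₀ : ℝ} (hC₀ : ∀ x y : X, -C₀ ≤ c x y) {α r s : ℝ} {x y z : X}
    (hr : peierls c α x y = (r : EReal)) (hs : peierls c α x z = (s : EReal)) :
    s ≤ r + c y z + α := by
  by_contra hcon
  push_neg at hcon
  set ε := (s - (r + c y z + α)) / 2 with hεdef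
  have hε : 0 < ε := by simp only [hεdef]; linarith
  obtain ⟨N, hN⟩ := (Filter.eventually_atTop).mp (ev_gt_of_liminf hs hε)
  obtain ⟨n, hn, hny⟩ := (Filter.frequently_atTop).mp (freq_lt_of_liminf hr hε) (max N 1)
  have hn1 : 1 ≤ n := le_trans (le_max_right N 1) hn
  have hnN : N ≤ n + 1 := by have := le_trans (le_max_left N 1) hn; omega
  have htri := cChain_succ_le hC₀ hn1 x y z
  have hz := hN (n + 1) hnN
  push_cast at hz hny ⊢
  linarith
end liminfFacts


section key
variable {X : Type*} [MetricSpace X] [Nonempty X] [ProperSpace X]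

lemma cChain_zero_self (c : X → X → ℝ) (x : X) : cChain c 0 x x = 0 := by
  have h : chainSet c 0 x x = {0} := by
    ext r
    constructor
    · rintro ⟨p, h0, h1, rfl⟩; simp
    · rintro rfl; exact ⟨fun _ => x, rfl, rfl, by simp⟩
  rw [cChain_def, h, csInf_singleton]

lemma key_exists {B K : ℝ} (hB : 1 ≤ B) (hK : 0 < K) (hlen : IsBLengthSpaceAtScale X B K)
    {c : X → X → ℝ} (hcont : Continuous fun q : X × X => c q.1 q.2)
    (hsl : UniformlySuperlinear c) (hub : UniformlyBounded c)
    (hfin : ∀ x y : X, ∃ r : ℝ, peierls c (critValue c) x y = (r : EReal))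
    (x z : X) {ε : ℝ} (hε : 0 < ε) :
    ∃ y : X, (peierls c (critValue c) x y).toReal + c y z + critValue c
      ≤ (peierls c (critValue c) x z).toReal + ε := by
  set α := critValue c with hα
  obtain ⟨C₀', hC₀'⟩ := hsl 0 le_rfl
  have hC₀ : ∀ a b : X, -C₀' ≤ c a b := fun a b => by have := hC₀' a b; simpa using this
  obtain ⟨A₀, hA₀⟩ := hub 0
  obtain ⟨A2, hA2⟩ := hub (2 * K)
  set a₁ := max (A2 + α) 0 with ha₁
  have ha₁0 : 0 ≤ a₁ := le_max_right _ _
  set κ := a₁ * B / K with hκ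
  have hκ0 : 0 ≤ κ := div_nonneg (mul_nonneg ha₁0 (by linarith)) hK.le
  obtain ⟨C₁, hC₁⟩ := hsl (κ + 1) (by linarith)
  clear_value α a₁ κ
  obtain ⟨s, hs⟩ := hfin x z
  have hfreq : ∀ N : ℕ, ∃ n ≥ N, cChain c n x z + n * α < s + ε / 8 :=
    fun N => (Filter.frequently_atTop).mp (freq_lt_of_liminf hs (by linarith)) N
  have main : ∀ k : ℕ, ∃ (m : ℕ) (q y : X) (σ : ℝ), k + 3 ≤ m ∧
      cChain c (m - 2) x q ≤ σ ∧
      σ + c q y + c y z + m * α ≤ s + ε / 4 ∧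
      (∀ w : X, cChain c (m - 1) x w ≤ σ + c q w) := by
    intro k
    obtain ⟨n, hn, hnz⟩ := hfreq (k + 3)
    obtain ⟨r, ⟨p, hp0, hpn, rfl⟩, hrlt⟩ :=
      Real.lt_sInf_add_pos (chainSet_nonempty (c := c) (n := n) (by omega) x z)
        (show (0:ℝ) < ε / 8 by linarith)
    rw [← cChain_def] at hrlt
    have hsplit : ∑ i ∈ Finset.range n, c (p i) (p (i + 1))
        = (∑ i ∈ Finset.range (n - 2), c (p i) (p (i + 1)))
          + c (p (n - 2)) (p (n - 1)) + c (p (n - 1)) z := by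
      have h1 : n = (n - 2) + 1 + 1 := by omega
      conv_lhs => rw [h1]
      rw [Finset.sum_range_succ, Finset.sum_range_succ]
      have e1 : n - 2 + 1 = n - 1 := by omega
      have e2 : n - 1 + 1 = n := by omega
      rw [e1, e2, hpn]
    rw [hsplit] at hrlt
    refine ⟨n, p (n - 2), p (n - 1), ∑ i ∈ Finset.range (n - 2), c (p i) (p (i + 1)),
      hn, cChain_le_sum hC₀ hp0 rfl, by linarith, ?_⟩
    intro w
    set q' : ℕ → X := fun i => if i ≤ n - 2 then p i else w with hq'
    have hle : cChain c (n - 1) x w ≤ ∑ i ∈ Finset.range (n - 1), c (q' i) (q' (i + 1)) :=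
      cChain_le_sum hC₀ (by simp [hq', hp0]) (by simp [hq', show ¬(n - 1 ≤ n - 2) by omega])
    have heq : ∑ i ∈ Finset.range (n - 1), c (q' i) (q' (i + 1))
        = (∑ i ∈ Finset.range (n - 2), c (p i) (p (i + 1))) + c (p (n - 2)) w := by
      have h1 : n - 1 = (n - 2) + 1 := by omega
      rw [h1, Finset.sum_range_succ]
      congr 1
      · refine Finset.sum_congr rfl fun i hi => ?_
        have hi' := Finset.mem_range.mp hi
        simp [hq', show i ≤ n - 2 by omega, show i + 1 ≤ n - 2 by omega]
      · simp [hq', show ¬(n - 2 + 1 ≤ n - 2) by omega]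
    rw [heq] at hle
    exact hle
  choose mf qf yf σf hmf hP1 hP2 hP3 using main
  set R₀ := s + ε / 4 + κ * dist z x + a₁ + 2 * C₁ - 2 * α with hR₀
  clear_value R₀
  have hball : ∀ k, qf k ∈ closedBall z (max R₀ 0) ∧ yf k ∈ closedBall z (max R₀ 0) := by
    intro k
    have hcast : ((mf k - 2 : ℕ) : ℝ) = (mf k : ℝ) - 2 := by
      rw [Nat.cast_sub (by have := hmf k; omega)]; norm_num
    have hlow : -(a₁ * (B * dist (qf k) x / K + 1))
        ≤ cChain c (mf k - 2) x (qf k) + ((mf k - 2 : ℕ) : ℝ) * α := by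
      rw [ha₁, hα]
      exact cChain_lower_lin hK hlen hC₀ hA₀ hA2 (n := mf k - 2)
        (by have := hmf k; omega) x (qf k)
    rw [hcast] at hlow
    have h1 : cChain c (mf k - 2) x (qf k) + ((mf k : ℝ) - 2) * α
        + (c (qf k) (yf k) + α) + (c (yf k) z + α) ≤ s + ε / 4 := by
      have hp1 := hP1 k
      have hp2 := hP2 k
      have : ((mf k : ℝ) - 2) * α + α + α = (mf k : ℝ) * α := by ring
      nlinarith [hp1, hp2]
    have hsl1 : (κ + 1) * dist (qf k) (yf k) - C₁ ≤ c (qf k) (yf k) := hC₁ _ _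
    have hsl2 : (κ + 1) * dist (yf k) z - C₁ ≤ c (yf k) z := hC₁ _ _
    have htri : dist (qf k) x ≤ dist (qf k) (yf k) + dist (yf k) z + dist z x :=
      calc dist (qf k) x ≤ dist (qf k) z + dist z x := dist_triangle _ _ _
        _ ≤ _ := by linarith [dist_triangle (qf k) (yf k) z]
    have hG : a₁ * (B * dist (qf k) x / K + 1) = κ * dist (qf k) x + a₁ := by
      rw [hκ]; field_simp
    have hmono : κ * dist (qf k) x
        ≤ κ * (dist (qf k) (yf k) + dist (yf k) z + dist z x) :=
      mul_le_mul_of_nonneg_left htri hκ0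
    have hexp : κ * (dist (qf k) (yf k) + dist (yf k) z + dist z x)
        = κ * dist (qf k) (yf k) + κ * dist (yf k) z + κ * dist z x := by ring
    have he1 : (κ + 1) * dist (qf k) (yf k) = κ * dist (qf k) (yf k) + dist (qf k) (yf k) := by
      ring
    have he2 : (κ + 1) * dist (yf k) z = κ * dist (yf k) z + dist (yf k) z := by ring
    have hd : dist (qf k) (yf k) + dist (yf k) z ≤ R₀ := by
      rw [hG] at hlow
      nlinarith [hlow, h1, hsl1, hsl2, hmono, hexp, he1, he2]
    constructor
    · rw [mem_closedBall]
      calc dist (qf k) z ≤ dist (qf k) (yf k) + dist (yf k) z := dist_triangle _ _ _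
        _ ≤ R₀ := hd
        _ ≤ max R₀ 0 := le_max_left _ _
    · rw [mem_closedBall]
      have := dist_nonneg (x := qf k) (y := yf k)
      calc dist (yf k) z ≤ R₀ := by linarith
        _ ≤ max R₀ 0 := le_max_left _ _
  have hcpt : IsCompact ((closedBall z (max R₀ 0)) ×ˢ (closedBall z (max R₀ 0))) :=
    (isCompact_closedBall z _).prod (isCompact_closedBall z _)
  obtain ⟨⟨q', y'⟩, hmem, φ, hφ, hconv⟩ := hcpt.tendsto_subseq
    (x := fun k => (qf k, yf k)) (fun k => Set.mk_mem_prod (hball k).1 (hball k).2)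
  have hqconv : Tendsto (fun k => qf (φ k)) atTop (𝓝 q') :=
    (continuous_fst.tendsto _).comp hconv
  have hyconv : Tendsto (fun k => yf (φ k)) atTop (𝓝 y') :=
    (continuous_snd.tendsto _).comp hconv
  set g : ℕ → ℝ := fun k => c (qf (φ k)) y' + c y' z - c (qf (φ k)) (yf (φ k)) - c (yf (φ k)) z
    with hg
  have t1 : Tendsto (fun k => c (qf (φ k)) y') atTop (𝓝 (c q' y')) :=
    (hcont.tendsto (q', y')).comp (hqconv.prodMk_nhds tendsto_const_nhds)
  have t2 : Tendsto (fun k => c (qf (φ k)) (yf (φ k))) atTop (𝓝 (c q' y')) :=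
    (hcont.tendsto (q', y')).comp hconv
  have t3 : Tendsto (fun k => c (yf (φ k)) z) atTop (𝓝 (c y' z)) :=
    (hcont.tendsto (y', z)).comp (hyconv.prodMk_nhds tendsto_const_nhds)
  have htg : Tendsto g atTop (𝓝 0) := by
    have h4 : Tendsto (fun k => c (qf (φ k)) y' + c y' z - c (qf (φ k)) (yf (φ k))
          - c (yf (φ k)) z) atTop (𝓝 (c q' y' + c y' z - c q' y' - c y' z)) :=
      ((t1.add (tendsto_const_nhds (x := c y' z))).sub t2).sub t3
    have h5 : c q' y' + c y' z - c q' y' - c y' z = 0 := by ring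
    rw [hg, ← h5]
    exact h4
  obtain ⟨r', hr'⟩ := hfin x y'
  obtain ⟨N1, hN1⟩ := (Filter.eventually_atTop).mp
    (ev_gt_of_liminf hr' (show (0:ℝ) < ε / 4 by linarith))
  obtain ⟨N2, hN2⟩ := (Filter.eventually_atTop).mp
    (htg.eventually_lt_const (show (0:ℝ) < ε / 4 by linarith))
  set k := max N1 N2 with hk
  set M := mf (φ k) with hM
  have hφk : k ≤ φ k := hφ.le_apply
  have hMk : k + 3 ≤ M := le_trans (by omega) (hmf (φ k))
  have h3 := hP3 (φ k) y'
  have h2 := hP2 (φ k)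
  have hlowM := hN1 (M - 1) (by omega)
  have hgk : g k < ε / 4 := hN2 k (le_max_right _ _)
  have hcastM : ((M - 1 : ℕ) : ℝ) = (M : ℝ) - 1 := by
    rw [Nat.cast_sub (by omega)]; norm_num
  refine ⟨y', ?_⟩
  rw [hr', hs, EReal.toReal_coe, EReal.toReal_coe]
  have hgdef : c (qf (φ k)) y'
      = c (qf (φ k)) (yf (φ k)) + c (yf (φ k)) z + g k - c y' z := by
    rw [hg]; ring
  rw [hcastM] at hlowM
  rw [hgdef] at h3
  linarith
end key


theorem weakKAM_neg {X : Type*} [MetricSpace X] [Nonempty X] [ProperSpace X]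
    {B K : ℝ} (hB : 1 ≤ B) (hK : 0 < K) (hlen : IsBLengthSpaceAtScale X B K)
    {c : X → X → ℝ} (hcont : Continuous fun q : X × X => c q.1 q.2)
    (hsl : UniformlySuperlinear c) (hub : UniformlyBounded c)
    (hfin : ∀ x y : X, ∃ r : ℝ, peierls c (critValue c) x y = (r : EReal)) (x y : X) :
    (peierls c (critValue c) x y).toReal =
      Tm c (fun z => (peierls c (critValue c) x z).toReal) y + critValue c := by
  obtain ⟨C₀', hC₀'⟩ := hsl 0 le_rfl
  have hC₀ : ∀ a b : X, -C₀' ≤ c a b := fun a b => by have := hC₀' a b; simpa using this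
  set α := critValue c with hα
  set H : X → ℝ := fun z => (peierls c α x z).toReal with hH
  have hpe : ∀ z, peierls c α x z = ((H z : ℝ) : EReal) := by
    intro z
    obtain ⟨r, hr⟩ := hfin x z
    rw [hr, hH]
    simp [hr]
  have hdom : ∀ w z : X, H z ≤ H w + c w z + α := fun w z =>
    peierls_dominated hC₀ (hpe w) (hpe z)
  have hbdd : BddBelow (range fun w => H w + c w y) := by
    refine ⟨H y - α, ?_⟩
    rintro r ⟨w, rfl⟩
    have := hdom w y
    show H y - α ≤ H w + c w y
    linarith
  have hub1 : Tm c H y ≤ H y - α := by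
    refine le_of_forall_pos_le_add fun ε hε => ?_
    obtain ⟨w, hw⟩ := key_exists hB hK hlen hcont hsl hub hfin x y hε
    have hw' : H w + c w y + α ≤ H y + ε := hw
    calc Tm c H y ≤ H w + c w y := ciInf_le hbdd w
      _ ≤ H y - α + ε := by linarith
  have hlb : H y - α ≤ Tm c H y := le_ciInf fun w => by
    have := hdom w y
    show H y - α ≤ H w + c w y
    linarith
  have heq : Tm c H y = H y - α := le_antisymm hub1 hlb
  rw [heq]
  ring

section swap
variable {X : Type*} [MetricSpace X]

lemma critValue_swap (c : X → X → ℝ) :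
    critValue (Function.swap c) = critValue c := by
  unfold critValue
  congr 1
  ext β
  constructor
  · rintro ⟨u, hu⟩
    refine ⟨fun w => -u w, fun a b => ?_⟩
    have := hu b a
    simp only [Function.swap] at this ⊢
    linarith
  · rintro ⟨u, hu⟩
    refine ⟨fun w => -u w, fun a b => ?_⟩
    have := hu b a
    simp only [Function.swap] at this ⊢
    linarith

lemma chainSet_swap (c : X → X → ℝ) (n : ℕ) (x y : X) :
    chainSet (Function.swap c) n x y = chainSet c n y x := by
  have key : ∀ (d : X → X → ℝ) (x y : X), chainSet (Function.swap d) n x y ⊆ chainSet d n y x := by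
    rintro d x y r ⟨p, h0, hn, rfl⟩
    refine ⟨fun i => p (n - i), by simp [hn], by simp [h0], ?_⟩
    conv_rhs => rw [← Finset.sum_range_reflect]
    refine Finset.sum_congr rfl fun i hi => ?_
    have hi' : i < n := Finset.mem_range.mp hi
    show Function.swap d (p i) (p (i + 1)) = d (p (n - (n - 1 - i))) (p (n - (n - 1 - i + 1)))
    have e1 : n - (n - 1 - i) = i + 1 := by omega
    have e2 : n - (n - 1 - i + 1) = i := by omega
    simp only [e1, e2]
  apply le_antisymm
  · exact key c x y
  · intro r hr
    exact key (Function.swap c) y x hr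
  
lemma peierls_swap (c : X → X → ℝ) (α : ℝ) (x y : X) :
    peierls (Function.swap c) α x y = peierls c α y x := by
  unfold peierls
  congr 1
  funext n
  rw [cChain_def, cChain_def, chainSet_swap]

lemma real_iInf_neg {ι : Sort*} (f : ι → ℝ) : (⨅ i, -f i) = -⨆ i, f i := by
  rw [iInf, Real.sInf_def]
  congr 2
  ext x
  simp only [Set.mem_neg, Set.mem_range]
  constructor
  · rintro ⟨i, hi⟩; exact ⟨i, by linarith⟩
  · rintro ⟨i, hi⟩; exact ⟨i, by linarith⟩

lemma Tp_eq_neg_Tm (c : X → X → ℝ) (u : X → ℝ) (y : X) :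
    Tp c u y = -Tm (Function.swap c) (fun w => -u w) y := by
  unfold Tp Tm
  have h1 : ∀ w, (-u w + Function.swap c w y) = -(u w - c y w) := fun w => by
    simp only [Function.swap]; ring
  simp_rw [h1]
  rw [real_iInf_neg, neg_neg]
end swap

theorem peierls_weak_KAM_solutions {X : Type*} [MetricSpace X] [Nonempty X] [ProperSpace X]
    {B K : ℝ} (hB : 1 ≤ B) (hK : 0 < K) (hlen : IsBLengthSpaceAtScale X B K)
    {c : X → X → ℝ} (hcont : Continuous fun q : X × X => c q.1 q.2)
    (hsl : UniformlySuperlinear c) (hub : UniformlyBounded c)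
    (hfin : ∀ x y : X, ∃ r : ℝ, peierls c (critValue c) x y = (r : EReal)) (x : X) :
    (∀ y : X, (peierls c (critValue c) x y).toReal =
      Tm c (fun z => (peierls c (critValue c) x z).toReal) y + critValue c) ∧
    (∀ y : X, -(peierls c (critValue c) y x).toReal =
      Tp c (fun z => -(peierls c (critValue c) z x).toReal) y - critValue c) := by
  constructor
  · intro y
    exact weakKAM_neg hB hK hlen hcont hsl hub hfin x y
  · intro y
    have hcont' : Continuous fun q : X × X => (Function.swap c) q.1 q.2 :=
      hcont.comp continuous_swap
    have hsl' : UniformlySuperlinear (Function.swap c) := by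
      intro k hk
      obtain ⟨C, hC⟩ := hsl k hk
      refine ⟨C, fun a b => ?_⟩
      show k * dist a b - C ≤ c b a
      rw [dist_comm]
      exact hC b a
    have hub' : UniformlyBounded (Function.swap c) := by
      intro R
      obtain ⟨A, hA⟩ := hub R
      exact ⟨A, fun a b hd => hA b a (by rwa [dist_comm])⟩
    have hfin' : ∀ a b : X, ∃ r : ℝ,
        peierls (Function.swap c) (critValue (Function.swap c)) a b = (r : EReal) := by
      intro a b
      rw [critValue_swap, peierls_swap]
      exact hfin b a
    have wk := weakKAM_neg hB hK hlen hcont' hsl' hub' hfin' x y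
    simp only [critValue_swap, peierls_swap] at wk
    have htp : Tp c (fun z => -(peierls c (critValue c) z x).toReal) y
        = -Tm (Function.swap c) (fun w => (peierls c (critValue c) w x).toReal) y := by
      rw [Tp_eq_neg_Tm]
      congr 1
      unfold Tm
      congr 1
      funext w
      simp
    rw [htp]
    linarith [wk]
end
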